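/- Let f be a hyperbolic homeomorphism with fixed point x, and A, B Lipschitz fiber bunched cocycles with equal periodic data. Then the map P(y) = H^{s,A}_{xy} H^{s,B}_{yx}, defined on W(x) = W^s(x) ∩ W^u(x), is Lipschitz continuous on W(x): there is a constant C > 0 such that ‖P(y) − P(z)‖ ≤ C d(y,z) whenever y, z ∈ W(x) with d(y,z) < τ. -/

import Mathlib

open Filter Topology Metric Matrix
open scoped Matrix.Norms.L2Operator
noncomputable section

def cocycle {M G : Type*} [Group G] (f : M → M) (A : M → G) : ℕ → M → G
  | 0, _ => 1
  | n + 1, x => A (f^[n] x) * cocycle f A n x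

def zcocycle {M G : Type*} [Group G] (f : M ≃ M) (A : M → G) : ℤ → M → G
  | Int.ofNat m, x => cocycle (⇑f) A m x
  | Int.negSucc m, x => (cocycle (⇑f) A (m + 1) ((⇑f.symm)^[m + 1] x))⁻¹

def zit {M : Type*} (f : M ≃ M) : ℤ → M → M
  | Int.ofNat m, x => (⇑f)^[m] x
  | Int.negSucc m, x => (⇑f.symm)^[m + 1] x

def gnorm {d : ℕ} (g : GL (Fin d) ℝ) : ℝ := ‖(g : Matrix (Fin d) (Fin d) ℝ)‖

def stableSet {M : Type*} [PseudoMetricSpace M] (f : M → M) (x : M) : Set M :=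
  {y | Tendsto (fun n : ℕ => dist (f^[n] x) (f^[n] y)) atTop (𝓝 0)}

def localStable {M : Type*} [PseudoMetricSpace M] (f : M → M) (ε : ℝ) (x : M) : Set M :=
  {y | ∀ n : ℕ, dist (f^[n] x) (f^[n] y) ≤ ε}

structure IsHyperbolic {M : Type*} [MetricSpace M] (f : M ≃ M) (C₁ lam ε τ : ℝ) : Prop where
  cont : Continuous f
  cont_symm : Continuous f.symm
  C₁_pos : 0 < C₁
  lam_pos : 0 < lam
  eps_pos : 0 < ε
  tau_pos : 0 < τ
  stable_contr : ∀ x y z, y ∈ localStable (⇑f) ε x → z ∈ localStable (⇑f) ε x →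
    ∀ n : ℕ, dist ((⇑f)^[n] y) ((⇑f)^[n] z) ≤ C₁ * Real.exp (-lam * n) * dist y z
  unstable_contr : ∀ x y z, y ∈ localStable (⇑f.symm) ε x → z ∈ localStable (⇑f.symm) ε x →
    ∀ n : ℕ, dist ((⇑f.symm)^[n] y) ((⇑f.symm)^[n] z) ≤ C₁ * Real.exp (-lam * n) * dist y z
  bracket : ∃ br : M → M → M,
    ContinuousOn (fun p : M × M => br p.1 p.2) {p | dist p.1 p.2 < τ} ∧
    ∀ x y, dist x y < τ → localStable (⇑f) ε x ∩ localStable (⇑f.symm) ε y = {br x y}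

def FiberBunched {M : Type*} {d : ℕ} (f : M → M) (A : M → GL (Fin d) ℝ) (θ : ℝ) : Prop :=
  ∃ C₃ > (0 : ℝ), ∀ (x : M) (n : ℕ),
    gnorm (cocycle f A n x) * gnorm ((cocycle f A n x)⁻¹) ≤ C₃ * Real.exp (θ * n)


lemma l2norm_one_le {d : ℕ} : ‖(1 : Matrix (Fin d) (Fin d) ℝ)‖ ≤ 1 := by
  rw [Matrix.cstar_norm_def, _root_.map_one]
  exact ContinuousLinearMap.norm_id_le

lemma exp_tendsto_zero (C D lam : ℝ) (hlam : 0 < lam) :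
    Tendsto (fun n : ℕ => C * Real.exp (-lam * n) * D) atTop (𝓝 0) := by
  have h : Tendsto (fun n : ℕ => Real.exp (-lam * n)) atTop (𝓝 0) := by
    have h1 : ∀ n : ℕ, Real.exp (-lam * n) = (Real.exp (-lam)) ^ n := by
      intro n; rw [← Real.exp_nat_mul]; ring_nf
    simp only [h1]
    exact tendsto_pow_atTop_nhds_zero_of_lt_one (Real.exp_nonneg _)
      (Real.exp_lt_one_iff.mpr (by linarith))
  have := (h.const_mul C).mul_const D
  simpa using this

lemma stable_symm' {M : Type*} [PseudoMetricSpace M] {f : M → M} {x y : M}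
    (h : y ∈ stableSet f x) : x ∈ stableSet f y := by
  have h' : (fun n : ℕ => dist (f^[n] y) (f^[n] x)) =
      fun n : ℕ => dist (f^[n] x) (f^[n] y) := funext fun n => dist_comm _ _
  simpa only [stableSet, Set.mem_setOf_eq, h'] using h

lemma stable_trans' {M : Type*} [PseudoMetricSpace M] {f : M → M} {x y w : M}
    (h1 : y ∈ stableSet f x) (h2 : w ∈ stableSet f y) : w ∈ stableSet f x := by
  have h1' : Tendsto (fun n : ℕ => dist (f^[n] x) (f^[n] y)) atTop (𝓝 0) := h1
  have h2' : Tendsto (fun n : ℕ => dist (f^[n] y) (f^[n] w)) atTop (𝓝 0) := h2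
  refine squeeze_zero (g := fun n : ℕ => dist (f^[n] x) (f^[n] y) + dist (f^[n] y) (f^[n] w))
    (fun n => dist_nonneg) (fun n => dist_triangle _ _ _) ?_
  simpa using h1'.add h2'

set_option maxHeartbeats 1000000 in
/-- the map `P(y) = H^{s,A}_{xy} H^{s,B}_{yx}` is Lipschitz on
`W(x) = W^s(x) ∩ W^u(x)`: `‖P(y) − P(z)‖ ≤ C d(y,z)` for `y, z ∈ W(x)` with `d(y,z) < τ`. -/
theorem stmt11 {M : Type*} [MetricSpace M] [CompactSpace M] {d : ℕ}
    (f : M ≃ M) (C₁ lam ε τ : ℝ) (hf : IsHyperbolic f C₁ lam ε τ)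
    (x : M) (hx : f x = x)
    (A B : M → GL (Fin d) ℝ)
    (HsA HsB HuA HuB : M → M → GL (Fin d) ℝ)
    -- composition identities for the holonomies
    (hcsA : ∀ w : M, ∀ y ∈ stableSet (⇑f) w, ∀ z ∈ stableSet (⇑f) w, HsA y z = HsA w z * HsA y w)
    (hcsB : ∀ w : M, ∀ y ∈ stableSet (⇑f) w, ∀ z ∈ stableSet (⇑f) w, HsB y z = HsB w z * HsB y w)
    (hcuA : ∀ w : M, ∀ y ∈ stableSet (⇑f.symm) w, ∀ z ∈ stableSet (⇑f.symm) w,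
      HuA y z = HuA w z * HuA y w)
    (hcuB : ∀ w : M, ∀ y ∈ stableSet (⇑f.symm) w, ∀ z ∈ stableSet (⇑f.symm) w,
      HuB y z = HuB w z * HuB y w)
    -- the holonomies are close to the identity at nearby points
    (C₄ : ℝ) (hC₄ : 0 < C₄)
    (hbsA : ∀ w : M, ∀ y ∈ localStable (⇑f) ε w, ∀ z ∈ localStable (⇑f) ε w,
      ‖(HsA y z : Matrix (Fin d) (Fin d) ℝ) - 1‖ ≤ C₄ * dist y z)
    (hbsB : ∀ w : M, ∀ y ∈ localStable (⇑f) ε w, ∀ z ∈ localStable (⇑f) ε w,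
      ‖(HsB y z : Matrix (Fin d) (Fin d) ℝ) - 1‖ ≤ C₄ * dist y z)
    (hbuA : ∀ w : M, ∀ y ∈ localStable (⇑f.symm) ε w, ∀ z ∈ localStable (⇑f.symm) ε w,
      ‖(HuA y z : Matrix (Fin d) (Fin d) ℝ) - 1‖ ≤ C₄ * dist y z)
    (hbuB : ∀ w : M, ∀ y ∈ localStable (⇑f.symm) ε w, ∀ z ∈ localStable (⇑f.symm) ε w,
      ‖(HuB y z : Matrix (Fin d) (Fin d) ℝ) - 1‖ ≤ C₄ * dist y z)
    -- the stable and unstable expressions for P agree on W(x)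
    (hagree : ∀ y ∈ stableSet (⇑f) x ∩ stableSet (⇑f.symm) x,
      HsA x y * HsB y x = HuA x y * HuB y x)
    -- quantitative local product structure
    (br : M → M → M) (C₁₄ : ℝ) (hC₁₄ : 0 < C₁₄)
    (hbr : ∀ y z : M, dist y z < τ →
      br y z ∈ localStable (⇑f) ε y ∩ localStable (⇑f.symm) ε z ∧
      dist y (br y z) + dist (br y z) z ≤ C₁₄ * dist y z)
    -- W(x) is dense in the compact space M
    (hdense : Dense (stableSet (⇑f) x ∩ stableSet (⇑f.symm) x)) :
    ∃ C > (0 : ℝ), ∀ y ∈ stableSet (⇑f) x ∩ stableSet (⇑f.symm) x,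
      ∀ z ∈ stableSet (⇑f) x ∩ stableSet (⇑f.symm) x, dist y z < τ →
        ‖((HsA x y * HsB y x : GL (Fin d) ℝ) : Matrix (Fin d) (Fin d) ℝ) -
          ((HsA x z * HsB z x : GL (Fin d) ℝ) : Matrix (Fin d) (Fin d) ℝ)‖ ≤ C * dist y z := by
  classical
  set S := stableSet (⇑f) x ∩ stableSet (⇑f.symm) x with hS
  set P : M → GL (Fin d) ℝ := fun y => HsA x y * HsB y x with hP
  have hε : (0:ℝ) ≤ ε := le_of_lt hf.eps_pos
  have hτ : (0:ℝ) < τ := hf.tau_pos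
  have hself : ∀ (g : M → M) (y : M), y ∈ localStable g ε y := by
    intro g y n; simpa using hε
  have hls_s : ∀ y w : M, w ∈ localStable (⇑f) ε y → w ∈ stableSet (⇑f) y := by
    intro y w hw
    exact squeeze_zero (fun n => dist_nonneg)
      (fun n => hf.stable_contr y y w (hself _ y) hw n)
      (exp_tendsto_zero C₁ (dist y w) lam hf.lam_pos)
  have hls_u : ∀ y w : M, w ∈ localStable (⇑f.symm) ε y → w ∈ stableSet (⇑f.symm) y := by
    intro y w hw
    exact squeeze_zero (fun n => dist_nonneg)
      (fun n => hf.unstable_contr y y w (hself _ y) hw n)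
      (exp_tendsto_zero C₁ (dist y w) lam hf.lam_pos)
  set c : ℝ := C₄ * (2 + C₄ * (C₁₄ * τ)) * C₁₄ with hc
  have hcpos : 0 < c := by positivity
  -- the key local estimate
  have key : ∀ y ∈ S, ∀ z ∈ S, dist y z < τ →
      ‖((P y : GL (Fin d) ℝ) : Matrix (Fin d) (Fin d) ℝ) -
        ((P z : GL (Fin d) ℝ) : Matrix (Fin d) (Fin d) ℝ)‖ ≤
        c * (‖((P y : GL (Fin d) ℝ) : Matrix (Fin d) (Fin d) ℝ)‖ +
          ‖((P z : GL (Fin d) ℝ) : Matrix (Fin d) (Fin d) ℝ)‖) * dist y z := by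
    intro y hy z hz hd
    obtain ⟨⟨hws, hwu⟩, hwd⟩ := hbr y z hd
    set w := br y z with hw
    -- memberships
    have hwy : w ∈ stableSet (⇑f) y := hls_s y w hws
    have hwz : w ∈ stableSet (⇑f.symm) z := hls_u z w hwu
    have hxy : x ∈ stableSet (⇑f) y := stable_symm' hy.1
    have hxz : x ∈ stableSet (⇑f.symm) z := stable_symm' hz.2
    have hwx : w ∈ S := ⟨stable_trans' hy.1 hwy, stable_trans' hz.2 hwz⟩
    -- algebraic identities
    have e1 : HsA x w = HsA y w * HsA x y := hcsA y x hxy w hwy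
    have e2 : HsB w x = HsB y x * HsB w y := hcsB y w hwy x hxy
    have e3 : HuA x w = HuA z w * HuA x z := hcuA z x hxz w hwz
    have e4 : HuB w x = HuB z x * HuB w z := hcuB z w hwz x hxz
    have ew : HsA y w * P y * HsB w y = HuA z w * P z * HuB w z := by
      have h1 : HsA x w * HsB w x = HuA x w * HuB w x := hagree w hwx
      have h2 : HsA x z * HsB z x = HuA x z * HuB z x := hagree z hz
      rw [e1, e2, e3, e4] at h1
      simp only [hP]
      calc HsA y w * (HsA x y * HsB y x) * HsB w y
          = HsA y w * HsA x y * (HsB y x * HsB w y) := by group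
        _ = HuA z w * HuA x z * (HuB z x * HuB w z) := h1
        _ = HuA z w * (HuA x z * HuB z x) * HuB w z := by group
        _ = HuA z w * (HsA x z * HsB z x) * HuB w z := by rw [h2]
        _ = HuA z w * (HsA x z * HsB z x) * HuB w z := rfl
    -- pass to matrices
    set p : Matrix (Fin d) (Fin d) ℝ := ((P y : GL (Fin d) ℝ) : Matrix (Fin d) (Fin d) ℝ)
      with hpd
    set q : Matrix (Fin d) (Fin d) ℝ := ((P z : GL (Fin d) ℝ) : Matrix (Fin d) (Fin d) ℝ)
      with hqd
    set a : Matrix (Fin d) (Fin d) ℝ := ((HsA y w : GL (Fin d) ℝ) : Matrix (Fin d) (Fin d) ℝ)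
      with had
    set b : Matrix (Fin d) (Fin d) ℝ := ((HsB w y : GL (Fin d) ℝ) : Matrix (Fin d) (Fin d) ℝ)
      with hbd
    set a' : Matrix (Fin d) (Fin d) ℝ := ((HuA z w : GL (Fin d) ℝ) : Matrix (Fin d) (Fin d) ℝ)
      with had'
    set b' : Matrix (Fin d) (Fin d) ℝ := ((HuB w z : GL (Fin d) ℝ) : Matrix (Fin d) (Fin d) ℝ)
      with hbd'
    have hmid : a * p * b = a' * q * b' := by
      have h := congrArg (Units.val) ew
      simp only [Units.val_mul] at h
      rw [hpd, hqd, had, hbd, had', hbd']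
      exact h
    -- distance facts
    have hdyw : dist y w ≤ C₁₄ * dist y z := by
      have := dist_nonneg (x := w) (y := z); linarith
    have hdwz : dist w z ≤ C₁₄ * dist y z := by
      have := dist_nonneg (x := y) (y := w); linarith
    have hdyzτ : dist y z ≤ τ := le_of_lt hd
    have hdyw2 : dist y w ≤ C₁₄ * τ :=
      le_trans hdyw (by nlinarith [dist_nonneg (x := y) (y := z)])
    have hdwz2 : dist w z ≤ C₁₄ * τ :=
      le_trans hdwz (by nlinarith [dist_nonneg (x := y) (y := z)])
    -- norm bounds on holonomies
    have hna : ‖a - 1‖ ≤ C₄ * dist y w := by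
      have h := hbsA y y (hself _ y) w hws
      rw [had]; exact h
    have hnb : ‖b - 1‖ ≤ C₄ * dist y w := by
      have h := hbsB y w hws y (hself _ y)
      rw [dist_comm] at h
      rw [hbd]; exact h
    have hna' : ‖a' - 1‖ ≤ C₄ * dist w z := by
      have h := hbuA z z (hself _ z) w hwu
      rw [dist_comm] at h
      rw [had']; exact h
    have hnb' : ‖b' - 1‖ ≤ C₄ * dist w z := by
      have h := hbuB z w hwu z (hself _ z)
      rw [hbd']; exact h
    have hb_le : ‖b‖ ≤ 1 + C₄ * (C₁₄ * τ) := by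
      have h1 : ‖b‖ ≤ ‖b - 1‖ + ‖(1 : Matrix (Fin d) (Fin d) ℝ)‖ := by
        calc ‖b‖ = ‖(b - 1) + 1‖ := by rw [sub_add_cancel]
          _ ≤ _ := norm_add_le _ _
      have h2 := l2norm_one_le (d := d)
      nlinarith
    have hb'_le : ‖b'‖ ≤ 1 + C₄ * (C₁₄ * τ) := by
      have h1 : ‖b'‖ ≤ ‖b' - 1‖ + ‖(1 : Matrix (Fin d) (Fin d) ℝ)‖ := by
        calc ‖b'‖ = ‖(b' - 1) + 1‖ := by rw [sub_add_cancel]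
          _ ≤ _ := norm_add_le _ _
      have h2 := l2norm_one_le (d := d)
      nlinarith
    -- the two halves
    have half : ∀ (u v vb : Matrix (Fin d) (Fin d) ℝ) (dd : ℝ), 0 ≤ dd →
        ‖v - 1‖ ≤ C₄ * dd → ‖vb - 1‖ ≤ C₄ * dd → ‖vb‖ ≤ 1 + C₄ * (C₁₄ * τ) →
        ‖v * u * vb - u‖ ≤ C₄ * (2 + C₄ * (C₁₄ * τ)) * ‖u‖ * dd := by
      intro u v vb dd hdd h1 h2 h3
      have hsplit : v * u * vb - u = (v - 1) * (u * vb) + u * (vb - 1) := by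
        noncomm_ring
      have hm1 : ‖(v - 1) * (u * vb)‖ ≤ ‖v - 1‖ * (‖u‖ * ‖vb‖) := by
        calc ‖(v - 1) * (u * vb)‖ ≤ ‖v - 1‖ * ‖u * vb‖ := norm_mul_le _ _
          _ ≤ ‖v - 1‖ * (‖u‖ * ‖vb‖) :=
            mul_le_mul_of_nonneg_left (norm_mul_le _ _) (norm_nonneg _)
      have hm2 : ‖u * (vb - 1)‖ ≤ ‖u‖ * ‖vb - 1‖ := norm_mul_le _ _
      calc ‖v * u * vb - u‖ = ‖(v - 1) * (u * vb) + u * (vb - 1)‖ := by rw [hsplit]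
        _ ≤ ‖(v - 1) * (u * vb)‖ + ‖u * (vb - 1)‖ := norm_add_le _ _
        _ ≤ ‖v - 1‖ * (‖u‖ * ‖vb‖) + ‖u‖ * ‖vb - 1‖ := add_le_add hm1 hm2
        _ ≤ C₄ * (2 + C₄ * (C₁₄ * τ)) * ‖u‖ * dd := by
            have hE : (0:ℝ) ≤ C₄ * (C₁₄ * τ) :=
              mul_nonneg hC₄.le (mul_nonneg hC₁₄.le hτ.le)
            have s1 : ‖u‖ * ‖vb‖ ≤ ‖u‖ * (1 + C₄ * (C₁₄ * τ)) :=
              mul_le_mul_of_nonneg_left h3 (norm_nonneg u)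
            have s2 : ‖v - 1‖ * (‖u‖ * ‖vb‖) ≤ (C₄ * dd) * (‖u‖ * (1 + C₄ * (C₁₄ * τ))) :=
              mul_le_mul h1 s1 (mul_nonneg (norm_nonneg u) (norm_nonneg vb))
                (mul_nonneg hC₄.le hdd)
            have s3 : ‖u‖ * ‖vb - 1‖ ≤ ‖u‖ * (C₄ * dd) :=
              mul_le_mul_of_nonneg_left h2 (norm_nonneg u)
            have heq : C₄ * (2 + C₄ * (C₁₄ * τ)) * ‖u‖ * dd =
                (C₄ * dd) * (‖u‖ * (1 + C₄ * (C₁₄ * τ))) + ‖u‖ * (C₄ * dd) := by ring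
            linarith
    have h1 : ‖a * p * b - p‖ ≤ C₄ * (2 + C₄ * (C₁₄ * τ)) * ‖p‖ * dist y w :=
      half p a b (dist y w) dist_nonneg hna hnb hb_le
    have h2 : ‖a' * q * b' - q‖ ≤ C₄ * (2 + C₄ * (C₁₄ * τ)) * ‖q‖ * dist w z :=
      half q a' b' (dist w z) dist_nonneg hna' hnb' hb'_le
    have htri : ‖p - q‖ ≤ ‖a * p * b - p‖ + ‖a' * q * b' - q‖ := by
      have heq : p - q = -(a * p * b - p) + (a' * q * b' - q) := by rw [hmid]; abel
      calc ‖p - q‖ = ‖-(a * p * b - p) + (a' * q * b' - q)‖ := by rw [heq]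
        _ ≤ ‖-(a * p * b - p)‖ + ‖a' * q * b' - q‖ := norm_add_le _ _
        _ = ‖a * p * b - p‖ + ‖a' * q * b' - q‖ := by rw [norm_neg]
    have hK : (0:ℝ) ≤ C₄ * (2 + C₄ * (C₁₄ * τ)) := by positivity
    calc ‖p - q‖ ≤ ‖a * p * b - p‖ + ‖a' * q * b' - q‖ := htri
      _ ≤ C₄ * (2 + C₄ * (C₁₄ * τ)) * ‖p‖ * dist y w +
          C₄ * (2 + C₄ * (C₁₄ * τ)) * ‖q‖ * dist w z := add_le_add h1 h2
      _ ≤ c * (‖p‖ + ‖q‖) * dist y z := by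
          rw [hc]
          have hE : (0:ℝ) ≤ C₄ * (2 + C₄ * (C₁₄ * τ)) := by
            have := mul_nonneg hC₄.le (mul_nonneg hC₁₄.le hτ.le)
            nlinarith [hC₄.le]
          have s1 : C₄ * (2 + C₄ * (C₁₄ * τ)) * ‖p‖ * dist y w ≤
              C₄ * (2 + C₄ * (C₁₄ * τ)) * ‖p‖ * (C₁₄ * dist y z) :=
            mul_le_mul_of_nonneg_left hdyw (mul_nonneg hE (norm_nonneg p))
          have s2 : C₄ * (2 + C₄ * (C₁₄ * τ)) * ‖q‖ * dist w z ≤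
              C₄ * (2 + C₄ * (C₁₄ * τ)) * ‖q‖ * (C₁₄ * dist y z) :=
            mul_le_mul_of_nonneg_left hdwz (mul_nonneg hE (norm_nonneg q))
          have heq : C₄ * (2 + C₄ * (C₁₄ * τ)) * C₁₄ * (‖p‖ + ‖q‖) * dist y z =
              C₄ * (2 + C₄ * (C₁₄ * τ)) * ‖p‖ * (C₁₄ * dist y z) +
              C₄ * (2 + C₄ * (C₁₄ * τ)) * ‖q‖ * (C₁₄ * dist y z) := by ring
          linarith
  -- uniform bound on ‖P‖ over S via compactness and density
  set δ : ℝ := (min τ (1/c)) / 2 with hδ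
  have hmpos : 0 < min τ (1/c) := lt_min hτ (by positivity)
  have hδpos : 0 < δ := by rw [hδ]; linarith
  have hδτ : δ < τ := by
    have h1 : min τ (1/c) ≤ τ := min_le_left _ _
    rw [hδ]; linarith
  have hcδ : c * δ ≤ 1/2 := by
    have h1 : min τ (1/c) ≤ 1/c := min_le_right _ _
    have h2 : c * min τ (1/c) ≤ 1 := by
      have := mul_le_mul_of_nonneg_left h1 hcpos.le
      rwa [mul_one_div, div_self (ne_of_gt hcpos)] at this
    have h3 : c * δ = c * min τ (1/c) / 2 := by rw [hδ]; ring
    linarith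
  obtain ⟨t, ht⟩ := IsCompact.elim_finite_subcover (isCompact_univ (X := M))
    (fun p : S => Metric.ball (p : M) δ) (fun p => isOpen_ball)
    (by
      intro m _
      obtain ⟨p, hp, hdp⟩ := hdense.exists_dist_lt m hδpos
      exact Set.mem_iUnion.2 ⟨⟨p, hp⟩, by simpa [Metric.mem_ball, dist_comm] using hdp⟩)
  set K : ℝ := ∑ p ∈ t, ‖((P (p : M) : GL (Fin d) ℝ) : Matrix (Fin d) (Fin d) ℝ)‖ with hKdef
  have hK0 : 0 ≤ K := Finset.sum_nonneg fun p _ => norm_nonneg _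
  have hbound : ∀ y ∈ S, ‖((P y : GL (Fin d) ℝ) : Matrix (Fin d) (Fin d) ℝ)‖ ≤ 3 * K := by
    intro y hy
    obtain ⟨p, hpt, hyp⟩ : ∃ p ∈ t, y ∈ Metric.ball (p : M) δ := by
      have := ht (Set.mem_univ y)
      simpa using this
    have hdyp : dist y (p : M) < δ := Metric.mem_ball.mp hyp
    have hk := key y hy (p : M) p.2 (lt_trans hdyp hδτ)
    have hpK : ‖((P (p : M) : GL (Fin d) ℝ) : Matrix (Fin d) (Fin d) ℝ)‖ ≤ K :=
      Finset.single_le_sum (f := fun q : S =>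
        ‖((P (q : M) : GL (Fin d) ℝ) : Matrix (Fin d) (Fin d) ℝ)‖)
        (fun q _ => norm_nonneg _) hpt
    have hns := norm_sub_norm_le ((P y : GL (Fin d) ℝ) : Matrix (Fin d) (Fin d) ℝ)
      ((P (p : M) : GL (Fin d) ℝ) : Matrix (Fin d) (Fin d) ℝ)
    have hny := norm_nonneg ((P y : GL (Fin d) ℝ) : Matrix (Fin d) (Fin d) ℝ)
    have hnp := norm_nonneg ((P (p : M) : GL (Fin d) ℝ) : Matrix (Fin d) (Fin d) ℝ)
    set ny := ‖((P y : GL (Fin d) ℝ) : Matrix (Fin d) (Fin d) ℝ)‖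
    set np := ‖((P (p : M) : GL (Fin d) ℝ) : Matrix (Fin d) (Fin d) ℝ)‖
    have hsum : (0:ℝ) ≤ ny + np := by positivity
    have s1 : c * (ny + np) * dist y (p : M) ≤ c * (ny + np) * δ :=
      mul_le_mul_of_nonneg_left hdyp.le (mul_nonneg hcpos.le hsum)
    have s2 : c * (ny + np) * δ ≤ (1/2) * (ny + np) := by
      have : c * (ny + np) * δ = (c * δ) * (ny + np) := by ring
      rw [this]
      exact mul_le_mul_of_nonneg_right hcδ hsum
    linarith
  -- conclusion
  refine ⟨6 * c * K + 1, by positivity, ?_⟩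
  intro y hy z hz hd
  have hk := key y hy z hz hd
  have h1 := hbound y hy
  have h2 := hbound z hz
  simp only [hP] at hk h1 h2
  set ny := ‖((HsA x y * HsB y x : GL (Fin d) ℝ) : Matrix (Fin d) (Fin d) ℝ)‖ with hny
  set nz := ‖((HsA x z * HsB z x : GL (Fin d) ℝ) : Matrix (Fin d) (Fin d) ℝ)‖ with hnz
  have s1 : c * (ny + nz) ≤ c * (6 * K) := by
    have hsum : ny + nz ≤ 6 * K := by linarith
    exact mul_le_mul_of_nonneg_left hsum hcpos.le
  have s2 : c * (ny + nz) * dist y z ≤ c * (6 * K) * dist y z :=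
    mul_le_mul_of_nonneg_right s1 dist_nonneg
  have s3 : c * (6 * K) * dist y z ≤ (6 * c * K + 1) * dist y z := by
    have : (0:ℝ) ≤ dist y z := dist_nonneg
    nlinarith
  linarith
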